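/- Let λ be a solution of the generalized characteristic equation such that limsup_{t→∞} ∫_0^r θ·|exp(−∫_{t−θ}^t λ(s) ds)| d‖η(t)‖(θ) < 1. Then for every solution x of the RFDE x'(t) = ∫_0^r x(t−θ) dη(t)(θ), the derivative of t ↦ x(t)·exp(−∫_{t₀}^t λ(s) ds) tends to 0 as t → ∞. -/

import Mathlib

open MeasureTheory Filter Topology

/- Context: for each `t ≥ t₀`, the complex measure `η t` on `[0, r]` is given in polar
form `dη(t) = h t dν(t)`, where `ν t` is a finite (nonnegative) measure supported on
`[0, r]` and `‖h t θ‖ = 1` for `ν t`-a.e. `θ`; its total variation measure is then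
`‖η t‖ = ν t`.  A solution of the RFDE `x'(t) = ∫_0^r x(t-θ) dη(t)(θ)` is a continuous
function on `[t₀ - r, ∞)`, differentiable on `[t₀, ∞)` (right derivative at `t₀`),
satisfying the equation there; `λ` is a solution of the generalized characteristic
equation `λ(t) = ∫_0^r exp(-∫_{t-θ}^t λ(s) ds) dη(t)(θ)`. -/
set_option maxHeartbeats 4000000 in
theorem stmt1
    (r t₀ : ℝ) (hr : 0 < r)
    (ν : ℝ → Measure ℝ)
    (hfin : ∀ t, t₀ ≤ t → IsFiniteMeasure (ν t))
    (hsupp : ∀ t, t₀ ≤ t → ν t (Set.Icc 0 r)ᶜ = 0)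
    (h : ℝ → ℝ → ℂ)
    (hh : ∀ t, t₀ ≤ t → ∀ᵐ θ ∂(ν t), ‖h t θ‖ = 1)
    -- λ is a solution of the generalized characteristic equation
    (lam : ℝ → ℂ)
    (hlamc : ContinuousOn lam (Set.Ici (t₀ - r)))
    (hlamint : ∀ t, t₀ ≤ t → IntegrableOn
      (fun θ => Complex.exp (-(∫ s in (t - θ)..t, lam s)) * h t θ) (Set.Icc 0 r) (ν t))
    (hlam : ∀ t, t₀ ≤ t →
      lam t = ∫ θ in Set.Icc 0 r, Complex.exp (-(∫ s in (t - θ)..t, lam s)) * h t θ ∂(ν t))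
    -- the smallness condition: limsup_{t→∞} ∫_0^r θ ‖exp(-∫_{t-θ}^t λ)‖ d‖η t‖(θ) < 1
    (hbdd : IsBoundedUnder (· ≤ ·) atTop (fun t => ∫ θ in Set.Icc 0 r,
      θ * ‖Complex.exp (-(∫ s in (t - θ)..t, lam s))‖ ∂(ν t)))
    (hV : limsup (fun t => ∫ θ in Set.Icc 0 r,
      θ * ‖Complex.exp (-(∫ s in (t - θ)..t, lam s))‖ ∂(ν t)) atTop < 1)
    -- x is a solution of the RFDE
    (x : ℝ → ℂ)
    (hxc : ContinuousOn x (Set.Ici (t₀ - r)))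
    (hxint : ∀ t, t₀ ≤ t →
      IntegrableOn (fun θ => x (t - θ) * h t θ) (Set.Icc 0 r) (ν t))
    (hx : ∀ t, t₀ ≤ t → HasDerivWithinAt x
      (∫ θ in Set.Icc 0 r, x (t - θ) * h t θ ∂(ν t)) (Set.Ici t₀) t) :
    ∃ y' : ℝ → ℂ,
      (∀ t, t₀ < t →
        HasDerivAt (fun u => x u * Complex.exp (-(∫ s in t₀..u, lam s))) (y' t) t) ∧
      Tendsto y' atTop (𝓝 0) := by
  -- Abbreviations
  set y : ℝ → ℂ := fun u => x u * Complex.exp (-(∫ s in t₀..u, lam s)) with hy_def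
  set E : ℝ → ℝ → ℂ := fun t θ => Complex.exp (-(∫ s in (t - θ)..t, lam s)) with hE_def
  set g : ℝ → ℂ := fun t => Complex.exp (-(∫ s in t₀..t, lam s)) *
    ((∫ θ in Set.Icc 0 r, x (t - θ) * h t θ ∂(ν t)) - lam t * x t) with hg_def
  -- the smallness exponent
  obtain ⟨q', hq'1, hq'2⟩ := exists_between hV
  set q : ℝ := max q' (1/2) with hq_def
  have hq0 : 0 < q := lt_of_lt_of_le (by norm_num) (le_max_right _ _)
  have hq1 : q < 1 := max_lt hq'2 (by norm_num)
  have hVev : ∀ᶠ t in atTop, (∫ θ in Set.Icc 0 r,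
      θ * ‖Complex.exp (-(∫ s in (t - θ)..t, lam s))‖ ∂(ν t)) ≤ q := by
    filter_upwards [eventually_lt_of_limsup_lt hq'1 hbdd] with t ht
    exact le_trans ht.le (le_max_left _ _)
  obtain ⟨T₀, hT₀⟩ := eventually_atTop.1 hVev
  obtain ⟨γ, hγ1, hqγ⟩ : ∃ γ : ℝ, 1 < γ ∧ q * γ < 1 := by
    refine ⟨(q + 1) / (2 * q), ?_, ?_⟩
    · rw [lt_div_iff₀ (by linarith)]; linarith
    · have heq : q * ((q + 1) / (2 * q)) = (q + 1) / 2 := by field_simp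
      rw [heq]; linarith
  have hγpos : 0 < γ := by linarith
  obtain ⟨δ, hδ0, hδ1, hδγ⟩ : ∃ δ : ℝ, 0 < δ ∧ δ < 1 ∧ ∀ k : ℕ, δ ^ k * γ ^ k = 1 := by
    refine ⟨1 / γ, by positivity, ?_, ?_⟩
    · rw [div_lt_one (by linarith)]; exact hγ1
    · intro k
      rw [div_pow, one_pow, div_mul_cancel₀]
      exact ne_of_gt (pow_pos hγpos k)
  have hδinv : ∀ k : ℕ, δ ^ k = (γ ^ k)⁻¹ :=
    fun k => eq_inv_of_mul_eq_one_left (hδγ k)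
  set T₁ : ℝ := max T₀ (t₀ + r + 1) with hT₁_def
  have hT₁t₀ : t₀ + r + 1 ≤ T₁ := le_max_right _ _
  -- interval integrability of lam
  have hsub : ∀ a b : ℝ, t₀ - r ≤ a → t₀ - r ≤ b → Set.uIcc a b ⊆ Set.Ici (t₀ - r) := by
    intro a b ha hb z hz
    exact le_trans (le_min ha hb) hz.1
  have hlamii : ∀ a b : ℝ, t₀ - r ≤ a → t₀ - r ≤ b → IntervalIntegrable lam volume a b :=
    fun a b ha hb => (hlamc.mono (hsub a b ha hb)).intervalIntegrable
  -- derivative of the primitive of lam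
  have hΛd : ∀ t, t₀ - r < t → HasDerivAt (fun u => ∫ s in t₀..u, lam s) (lam t) t := by
    intro t ht
    exact intervalIntegral.integral_hasDerivAt_right (hlamii t₀ t (by linarith) ht.le)
      (ContinuousOn.stronglyMeasurableAtFilter isOpen_Ioi (hlamc.mono Set.Ioi_subset_Ici_self) t ht)
      ((hlamc t ht.le).continuousAt (Ici_mem_nhds ht))
  -- Step 1: y has derivative g t at every t > t₀
  have hyd : ∀ t, t₀ < t → HasDerivAt y (g t) t := by
    intro t ht
    have hx' : HasDerivAt x (∫ θ in Set.Icc 0 r, x (t - θ) * h t θ ∂(ν t)) t :=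
      (hx t ht.le).hasDerivAt (Ici_mem_nhds ht)
    have h1 : HasDerivAt (fun u => Complex.exp (-(∫ s in t₀..u, lam s)))
        (Complex.exp (-(∫ s in t₀..t, lam s)) * (-(lam t))) t :=
      ((hΛd t (by linarith)).neg).cexp
    have h2 : HasDerivAt (fun u => x u * Complex.exp (-(∫ s in t₀..u, lam s))) _ t :=
      hx'.mul h1
    rw [hy_def, hg_def]
    convert h2 using 1
    ring
  -- continuity of y on [t₀, ∞)
  have hycontAt : ∀ t, t₀ ≤ t → ContinuousAt y t := by
    intro t ht
    have h1 : ContinuousAt x t := (hxc t (show t₀ - r ≤ t by linarith)).continuousAt (Ici_mem_nhds (by linarith))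
    have h2 : ContinuousAt (fun u => Complex.exp (-(∫ s in t₀..u, lam s))) t :=
      (((hΛd t (by linarith)).neg).cexp).continuousAt
    exact h1.mul h2
  have hycont : ∀ a b : ℝ, t₀ ≤ a → ContinuousOn y (Set.Icc a b) :=
    fun a b ha => fun z hz => (hycontAt z (le_trans ha hz.1)).continuousWithinAt
  -- pointwise identity used for the representation of g
  have hEeq : ∀ t, t₀ ≤ t → ∀ θ ∈ Set.Icc (0:ℝ) r,
      Complex.exp (-(∫ s in t₀..t, lam s)) * (x (t - θ) * h t θ)
        = y (t - θ) * (E t θ * h t θ) := by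
    intro t ht θ hθ
    have hadd : (∫ s in t₀..(t - θ), lam s) + (∫ s in (t - θ)..t, lam s)
        = ∫ s in t₀..t, lam s :=
      intervalIntegral.integral_add_adjacent_intervals
        (hlamii t₀ (t - θ) (by linarith) (by linarith [hθ.1, hθ.2]))
        (hlamii (t - θ) t (by linarith [hθ.1, hθ.2]) (by linarith))
    have hsplit : Complex.exp (-(∫ s in t₀..t, lam s))
        = Complex.exp (-(∫ s in t₀..(t - θ), lam s)) * E t θ := by
      simp only [hE_def]
      rw [← Complex.exp_add, ← neg_add, hadd]
    rw [hsplit, hy_def]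
    ring
  have hintA0 : ∀ t, t₀ ≤ t →
      IntegrableOn (fun θ => y (t - θ) * (E t θ * h t θ)) (Set.Icc 0 r) (ν t) := by
    intro t ht
    exact IntegrableOn.congr_fun ((hxint t ht).const_mul (Complex.exp (-(∫ s in t₀..t, lam s))))
      (fun θ hθ => hEeq t ht θ hθ) measurableSet_Icc
  have hintB0 : ∀ t, t₀ ≤ t →
      IntegrableOn (fun θ => y t * (E t θ * h t θ)) (Set.Icc 0 r) (ν t) := by
    intro t ht
    exact (hlamint t ht).const_mul (y t)
  -- Step 2: representation of g
  have hgrep : ∀ t, t₀ ≤ t → g t =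
      ∫ θ in Set.Icc 0 r, (y (t - θ) - y t) * (E t θ * h t θ) ∂(ν t) := by
    intro t ht
    have hA : Complex.exp (-(∫ s in t₀..t, lam s)) *
          (∫ θ in Set.Icc 0 r, x (t - θ) * h t θ ∂(ν t))
        = ∫ θ in Set.Icc 0 r, y (t - θ) * (E t θ * h t θ) ∂(ν t) := by
      rw [← integral_const_mul]
      exact setIntegral_congr_fun measurableSet_Icc (fun θ hθ => hEeq t ht θ hθ)
    have hB : Complex.exp (-(∫ s in t₀..t, lam s)) * (lam t * x t)
        = ∫ θ in Set.Icc 0 r, y t * (E t θ * h t θ) ∂(ν t) := by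
      have h1 : (∫ θ in Set.Icc 0 r, y t * (E t θ * h t θ) ∂(ν t)) = y t * lam t := by
        rw [integral_const_mul]
        congr 1
        exact (hlam t ht).symm
      rw [h1, hy_def]
      ring
    calc g t = Complex.exp (-(∫ s in t₀..t, lam s)) *
          (∫ θ in Set.Icc 0 r, x (t - θ) * h t θ ∂(ν t))
          - Complex.exp (-(∫ s in t₀..t, lam s)) * (lam t * x t) := by
            simp only [hg_def]; ring
      _ = ∫ θ in Set.Icc 0 r,
            (y (t - θ) * (E t θ * h t θ) - y t * (E t θ * h t θ)) ∂(ν t) := by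
            rw [hA, hB, integral_sub (hintA0 t ht) (hintB0 t ht)]
      _ = _ := by
            congr 1
            funext θ
            ring
  -- integrability facts
  have hintA : ∀ t, t₀ ≤ t →
      IntegrableOn (fun θ => (y (t - θ) - y t) * (E t θ * h t θ)) (Set.Icc 0 r) (ν t) := by
    intro t ht
    exact IntegrableOn.congr_fun ((hintA0 t ht).sub (hintB0 t ht))
      (fun θ _ => by simp only [Pi.sub_apply]; ring) measurableSet_Icc
  have hintEnorm : ∀ t, t₀ ≤ t → IntegrableOn (fun θ => ‖E t θ‖) (Set.Icc 0 r) (ν t) := by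
    intro t ht
    refine ((hlamint t ht).norm).congr ?_
    filter_upwards [ae_restrict_of_ae (hh t ht)] with θ hθ
    simp only [hE_def, norm_mul, hθ, mul_one]
  have hintθE : ∀ t, t₀ ≤ t →
      IntegrableOn (fun θ => θ * ‖E t θ‖) (Set.Icc 0 r) (ν t) := by
    intro t ht
    refine Integrable.mono ((hintEnorm t ht).const_mul r) ?_ ?_
    · exact aestronglyMeasurable_id.mul (hintEnorm t ht).aestronglyMeasurable
    · filter_upwards [ae_restrict_mem measurableSet_Icc] with θ hθ
      have h0 : (0:ℝ) ≤ ‖E t θ‖ := norm_nonneg _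
      rw [Real.norm_eq_abs, Real.norm_eq_abs, abs_mul, abs_mul, abs_of_nonneg h0,
        abs_of_nonneg hθ.1, abs_of_nonneg hr.le]
      exact mul_le_mul_of_nonneg_right hθ.2 h0
  -- Step 3+4: key estimate
  have hkey : ∀ t, T₁ ≤ t → ∀ c : ℝ, 0 ≤ c →
      (∀ θ ∈ Set.Icc (0:ℝ) r, ‖y (t - θ) - y t‖ ≤ c * θ) → ‖g t‖ ≤ q * c := by
    intro t ht c hc hb
    have ht₀ : t₀ ≤ t := by linarith [hT₁t₀]
    rw [hgrep t ht₀]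
    refine le_trans (norm_integral_le_integral_norm _) ?_
    have hmono : (∫ θ in Set.Icc 0 r, ‖(y (t - θ) - y t) * (E t θ * h t θ)‖ ∂(ν t))
        ≤ ∫ θ in Set.Icc 0 r, c * (θ * ‖E t θ‖) ∂(ν t) := by
      refine integral_mono_ae ((hintA t ht₀).norm) ((hintθE t ht₀).const_mul c) ?_
      filter_upwards [ae_restrict_of_ae (hh t ht₀), ae_restrict_mem measurableSet_Icc]
        with θ hθ1 hθ2
      rw [norm_mul, norm_mul, hθ1, mul_one]
      calc ‖y (t - θ) - y t‖ * ‖E t θ‖ ≤ (c * θ) * ‖E t θ‖ :=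
            mul_le_mul_of_nonneg_right (hb θ hθ2) (norm_nonneg _)
        _ = c * (θ * ‖E t θ‖) := by ring
    refine le_trans hmono ?_
    rw [integral_const_mul, mul_comm q c]
    refine mul_le_mul_of_nonneg_left ?_ hc
    exact hT₀ t (le_trans (le_max_left _ _) ht)
  -- MVT window lemma
  have hwin : ∀ a b : ℝ, t₀ < a → a ≤ b → ∀ c : ℝ,
      (∀ s ∈ Set.Ico a b, ‖g s‖ ≤ c) → ‖y b - y a‖ ≤ c * (b - a) := by
    intro a b ha hab c hc
    have hd : ∀ s ∈ Set.Icc a b, HasDerivWithinAt y (g s) (Set.Icc a b) s :=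
      fun s hs => (hyd s (lt_of_lt_of_le ha hs.1)).hasDerivWithinAt
    have := norm_image_sub_le_of_norm_deriv_le_segment' hd hc b (Set.right_mem_Icc.2 hab)
    simpa using this
  -- window contraction
  have hcontr : ∀ t, T₁ ≤ t → ∀ c : ℝ, 0 ≤ c →
      (∀ s ∈ Set.Icc (t - r) t, ‖g s‖ ≤ c) → ‖g t‖ ≤ q * c := by
    intro t ht c hc hball
    refine hkey t ht c hc ?_
    intro θ hθ
    have h1 : t₀ < t - θ := by
      have := hθ.2
      have h2 : t₀ + r + 1 ≤ t := le_trans hT₁t₀ ht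
      linarith
    rw [norm_sub_rev]
    have := hwin (t - θ) t h1 (by linarith [hθ.1]) c
      (fun s hs => hball s ⟨by linarith [hs.1, hθ.2], hs.2.le⟩)
    simpa using this
  -- chain step
  have hstep : ∀ ξ, T₁ ≤ ξ → ∀ c : ℝ, 0 ≤ c → q * c < ‖g ξ‖ →
      ∃ θ ξ', 0 < θ ∧ θ ≤ r ∧ ξ - θ ≤ ξ' ∧ ξ' < ξ ∧ c < ‖g ξ'‖ ∧
        c * θ < ‖y (ξ - θ) - y ξ‖ := by
    intro ξ hξ c hc hgc
    have hnot : ¬ (∀ θ ∈ Set.Icc (0:ℝ) r, ‖y (ξ - θ) - y ξ‖ ≤ c * θ) := by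
      intro hcon
      exact absurd (hkey ξ hξ c hc hcon) (not_le.2 hgc)
    push_neg at hnot
    obtain ⟨θ, hθmem, hθgt⟩ := hnot
    have hθ0 : 0 < θ := by
      rcases eq_or_lt_of_le hθmem.1 with h0 | h0
      · exfalso
        rw [← h0] at hθgt
        simp at hθgt
      · exact h0
    have hξθ : t₀ < ξ - θ := by
      have := hθmem.2
      have h2 : t₀ + r + 1 ≤ ξ := le_trans hT₁t₀ hξ
      linarith
    have hex : ∃ ξ' ∈ Set.Ico (ξ - θ) ξ, c < ‖g ξ'‖ := by
      by_contra hcon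
      push_neg at hcon
      have h1 := hwin (ξ - θ) ξ hξθ (by linarith) c (fun s hs => hcon s hs)
      rw [norm_sub_rev] at hθgt
      have h2 : ‖y ξ - y (ξ - θ)‖ ≤ c * θ := by
        have h3 : ξ - (ξ - θ) = θ := by ring
        rwa [h3] at h1
      exact absurd h2 (not_le.2 hθgt)
    obtain ⟨ξ', hξ'mem, hξ'⟩ := hex
    exact ⟨θ, ξ', hθ0, hθmem.2, hξ'mem.1, hξ'mem.2, hξ', hθgt⟩
  -- Proposition B : local bound
  have hlocb : ∀ s, T₁ + 1 ≤ s → ∀ C : ℝ, 0 ≤ C →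
      (∀ z ∈ Set.Icc (s - 1 - r) s, ‖y z‖ ≤ C) → ‖g s‖ ≤ (2 * C + 1) / (γ - 1) := by
    intro s hs C hC hyC
    by_contra hcon
    push_neg at hcon
    set B : ℝ := 2 * C + 1 with hB_def
    set U : ℝ := ‖g s‖ with hU_def
    have hγ0 : 0 < γ - 1 := by linarith
    have hB0 : 0 < B := by rw [hB_def]; linarith
    have hU0 : 0 < U := lt_trans (div_pos hB0 hγ0) hcon
    have hUγ0 : 0 < U * (γ - 1) := mul_pos hU0 hγ0
    have hEU : B / (U * (γ - 1)) < 1 := by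
      rw [div_lt_one hUγ0]
      calc B = (B / (γ - 1)) * (γ - 1) := by field_simp
        _ < U * (γ - 1) := mul_lt_mul_of_pos_right hcon hγ0
    -- the invariant of the chain
    set Inv : ℕ → ℝ → Prop := fun k ξ =>
      ξ ≤ s ∧ s - ξ ≤ B / (U * (γ - 1)) * (1 - δ ^ k) ∧ γ ^ k * U ≤ ‖g ξ‖ with hInv_def
    have hInvT₁ : ∀ k ξ, Inv k ξ → T₁ ≤ ξ ∧ s - 1 ≤ ξ := by
      intro k ξ hI
      obtain ⟨hI1, hI2, hI3⟩ := hI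
      have hδk : (0:ℝ) ≤ δ ^ k := (pow_pos hδ0 k).le
      have hE0 : (0:ℝ) ≤ B / (U * (γ - 1)) := (div_pos hB0 hUγ0).le
      have h1 : s - ξ ≤ B / (U * (γ - 1)) := le_trans hI2 (by nlinarith)
      exact ⟨by linarith, by linarith⟩
    -- one step of the chain
    have hstep' : ∀ k ξ, Inv k ξ → ∃ ξ', Inv (k+1) ξ' ∧
        ∃ θ, 0 < θ ∧ θ ≤ r ∧ ξ - θ ≤ ξ' ∧ ξ' < ξ ∧
          γ ^ (k+1) * U * θ < ‖y (ξ - θ) - y ξ‖ := by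
      intro k ξ hI
      obtain ⟨hT₁ξ, hs1ξ⟩ := hInvT₁ k ξ hI
      obtain ⟨hI1, hI2, hI3⟩ := hI
      have hγkU : (0:ℝ) < γ ^ k * U := mul_pos (pow_pos hγpos k) hU0
      have hγk1U : (0:ℝ) < γ ^ (k+1) * U := mul_pos (pow_pos hγpos (k+1)) hU0
      have hlt : q * (γ ^ (k+1) * U) < ‖g ξ‖ := by
        refine lt_of_lt_of_le ?_ hI3
        have heq : q * (γ ^ (k+1) * U) = (q * γ) * (γ ^ k * U) := by ring
        rw [heq]
        nlinarith
      obtain ⟨θ, ξ', hθ0, hθr, hl, hu, hgξ', hq2⟩ := hstep ξ hT₁ξ _ hγk1U.le hlt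
      have hΔ : ‖y (ξ - θ) - y ξ‖ ≤ 2 * C := by
        have h1 : ‖y (ξ - θ)‖ ≤ C := hyC _ ⟨by linarith, by linarith⟩
        have h2 : ‖y ξ‖ ≤ C := hyC _ ⟨by linarith, by linarith⟩
        calc ‖y (ξ - θ) - y ξ‖ ≤ ‖y (ξ - θ)‖ + ‖y ξ‖ := norm_sub_le _ _
          _ ≤ 2 * C := by linarith
      have hθB : θ < B / (γ ^ (k+1) * U) := by
        rw [lt_div_iff₀ hγk1U]
        calc θ * (γ ^ (k+1) * U) = γ ^ (k+1) * U * θ := by ring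
          _ < ‖y (ξ - θ) - y ξ‖ := hq2
          _ ≤ 2 * C := hΔ
          _ < B := by rw [hB_def]; linarith
      have hkey2 : B / (U * (γ - 1)) * (1 - δ ^ k) + B / (γ ^ (k+1) * U)
          = B / (U * (γ - 1)) * (1 - δ ^ (k+1)) := by
        rw [hδinv, hδinv]
        have h1 : γ ^ k ≠ 0 := ne_of_gt (pow_pos hγpos k)
        have h2 : γ ≠ 0 := ne_of_gt hγpos
        have h3 : U ≠ 0 := ne_of_gt hU0
        have h4 : γ - 1 ≠ 0 := ne_of_gt hγ0
        have h5 : γ ^ (k+1) ≠ 0 := ne_of_gt (pow_pos hγpos (k+1))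
        field_simp
        ring
      refine ⟨ξ', ⟨by linarith, ?_, hgξ'.le⟩, θ, hθ0, hθr, hl, hu, hq2⟩
      calc s - ξ' ≤ (s - ξ) + θ := by linarith
        _ ≤ B / (U * (γ - 1)) * (1 - δ ^ k) + B / (γ ^ (k+1) * U) := by linarith
        _ = B / (U * (γ - 1)) * (1 - δ ^ (k+1)) := hkey2
    have hInv0 : Inv 0 s := by
      refine ⟨le_refl s, by simp, by simp [hU_def]⟩
    -- build the chain by recursion and choice
    obtain ⟨ξs, θs, hθ0s, hθrs, hθls, hθus, hθqs, hlb, hT₁s, hub⟩ :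
        ∃ (ξs θs : ℕ → ℝ), (∀ k, 0 < θs k) ∧ (∀ k, θs k ≤ r) ∧
          (∀ k, ξs k - θs k ≤ ξs (k+1)) ∧ (∀ k, ξs (k+1) < ξs k) ∧
          (∀ k, γ ^ (k+1) * U * θs k < ‖y (ξs k - θs k) - y (ξs k)‖) ∧
          (∀ k, s - 1 ≤ ξs k) ∧ (∀ k, T₁ ≤ ξs k) ∧ (∀ k, ξs k ≤ s) := by
      have hnext : ∀ k (p : {ξ : ℝ // Inv k ξ}), ∃ ξ' : ℝ, Inv (k+1) ξ' ∧
          ∃ θ, 0 < θ ∧ θ ≤ r ∧ p.1 - θ ≤ ξ' ∧ ξ' < p.1 ∧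
            γ ^ (k+1) * U * θ < ‖y (p.1 - θ) - y p.1‖ :=
        fun k p => hstep' k p.1 p.2
      set seq : ∀ k : ℕ, {ξ : ℝ // Inv k ξ} := fun k => Nat.rec ⟨s, hInv0⟩
        (fun k ih => ⟨(hnext k ih).choose, (hnext k ih).choose_spec.1⟩) k with hseq_def
      have hseqrel : ∀ k, ∃ θ, 0 < θ ∧ θ ≤ r ∧ (seq k).1 - θ ≤ (seq (k+1)).1 ∧
          (seq (k+1)).1 < (seq k).1 ∧
          γ ^ (k+1) * U * θ < ‖y ((seq k).1 - θ) - y (seq k).1‖ :=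
        fun k => (hnext k (seq k)).choose_spec.2
      choose θs hθ0s hθrs hθls hθus hθqs using hseqrel
      exact ⟨fun k => (seq k).1, θs, hθ0s, hθrs, hθls, hθus, hθqs,
        fun k => (hInvT₁ k (seq k).1 (seq k).2).2,
        fun k => (hInvT₁ k (seq k).1 (seq k).2).1,
        fun k => (seq k).2.1⟩
    have hanti : StrictAnti ξs := strictAnti_nat_of_succ_lt hθus
    have hbdd2 : BddBelow (Set.range ξs) := by
      refine ⟨s - 1, ?_⟩
      rintro z ⟨k, rfl⟩
      exact hlb k
    set ζ : ℝ := ⨅ k, ξs k with hζ_def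
    have htendζ : Tendsto ξs atTop (𝓝 ζ) := tendsto_atTop_ciInf hanti.antitone hbdd2
    have hζle : ∀ k, ζ ≤ ξs k := fun k => ciInf_le hbdd2 k
    have hζlt : ∀ k, ζ < ξs k :=
      fun k => lt_of_le_of_lt (hζle (k+1)) (hanti (Nat.lt_succ_self k))
    have hζge : s - 1 ≤ ζ := le_ciInf hlb
    have hζt₀ : t₀ < ζ := by linarith [hT₁t₀]
    -- local Lipschitz bound at ζ from differentiability
    set K : ℝ := ‖g ζ‖ + 1 with hK_def
    have hK0 : 0 < K := by rw [hK_def]; linarith [norm_nonneg (g ζ)]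
    have hKgt : ‖g ζ‖ < K := by rw [hK_def]; linarith
    have hslope : Tendsto (fun z => ‖slope y ζ z‖) (𝓝[≠] ζ) (𝓝 ‖g ζ‖) :=
      (hasDerivAt_iff_tendsto_slope.1 (hyd ζ hζt₀)).norm
    have hev : ∀ᶠ z in 𝓝[≠] ζ, ‖slope y ζ z‖ < K := hslope.eventually_lt_const hKgt
    rw [eventually_nhdsWithin_iff, Metric.eventually_nhds_iff] at hev
    obtain ⟨ρ, hρ0, hρ⟩ := hev
    have hKlip : ∀ z, |z - ζ| < ρ → ‖y z - y ζ‖ ≤ K * |z - ζ| := by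
      intro z hz
      rcases eq_or_ne z ζ with rfl | hne
      · simp
      · have h1 : ‖slope y ζ z‖ < K := by
          refine hρ ?_ ?_
          · rwa [Real.dist_eq]
          · simpa using hne
        have h2 : y z - y ζ = (z - ζ) • slope y ζ z := (sub_smul_slope y ζ z).symm
        rw [h2, norm_smul, Real.norm_eq_abs, mul_comm K]
        exact mul_le_mul_of_nonneg_left h1.le (abs_nonneg _)
    -- eventual smallness conditions
    set D : ℝ := 2 * K / U with hD_def
    have hD0 : 0 < D := by rw [hD_def]; exact div_pos (by linarith) hU0
    have hθsB : ∀ k, θs k < B / U * δ ^ (k+1) := by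
      intro k
      have h1 : ‖y (ξs k - θs k) - y (ξs k)‖ ≤ 2 * C := by
        have hy1 : ‖y (ξs k - θs k)‖ ≤ C :=
          hyC _ ⟨by linarith [hlb k, hθrs k], by linarith [hub k, hθ0s k]⟩
        have hy2 : ‖y (ξs k)‖ ≤ C := hyC _ ⟨by linarith [hlb k], hub k⟩
        calc ‖y (ξs k - θs k) - y (ξs k)‖ ≤ ‖y (ξs k - θs k)‖ + ‖y (ξs k)‖ :=
              norm_sub_le _ _
          _ ≤ 2 * C := by linarith
      have hγk1U : (0:ℝ) < γ ^ (k+1) * U := mul_pos (pow_pos hγpos (k+1)) hU0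
      have h2 : γ ^ (k+1) * U * θs k < B := by
        calc γ ^ (k+1) * U * θs k < ‖y (ξs k - θs k) - y (ξs k)‖ := hθqs k
          _ ≤ 2 * C := h1
          _ < B := by rw [hB_def]; linarith
      have h3 : θs k < B / (γ ^ (k+1) * U) := by
        rw [lt_div_iff₀ hγk1U]
        linarith
      have h4 : B / (γ ^ (k+1) * U) = B / U * δ ^ (k+1) := by
        rw [hδinv, ← div_eq_mul_inv, div_div, mul_comm U]
      rwa [h4] at h3
    have hev1 : ∀ᶠ k : ℕ in atTop, ξs k - ζ < ρ / 2 := by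
      have h1 := htendζ (Metric.ball_mem_nhds ζ (by linarith : (0:ℝ) < ρ / 2))
      filter_upwards [h1] with k hk
      rw [Set.mem_preimage, Metric.mem_ball, Real.dist_eq,
        abs_of_nonneg (by linarith [hζle k] : (0:ℝ) ≤ ξs k - ζ)] at hk
      exact hk
    have hδtend : Tendsto (fun k : ℕ => δ ^ (k+1)) atTop (𝓝 0) := by
      have h1 := tendsto_pow_atTop_nhds_zero_of_lt_one hδ0.le hδ1
      exact h1.comp (tendsto_add_atTop_nat 1)
    have hev2 : ∀ᶠ k : ℕ in atTop, B / U * δ ^ (k+1) ≤ ρ / 2 := by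
      have h1 : Tendsto (fun k : ℕ => B / U * δ ^ (k+1)) atTop (𝓝 (B / U * 0)) :=
        hδtend.const_mul (B / U)
      rw [mul_zero] at h1
      exact h1.eventually_le_const (by linarith)
    have hev3 : ∀ᶠ k : ℕ in atTop, K ≤ γ ^ (k+1) * U := by
      obtain ⟨N, hN⟩ := eventually_atTop.1
        ((tendsto_pow_atTop_atTop_of_one_lt hγ1).eventually_ge_atTop (K / U))
      rw [eventually_atTop]
      refine ⟨N, fun k hk => ?_⟩
      have h2 : K / U ≤ γ ^ (k+1) := hN (k+1) (by omega)
      calc K = K / U * U := by field_simp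
        _ ≤ γ ^ (k+1) * U := mul_le_mul_of_nonneg_right h2 hU0.le
    have hev4 : ∀ᶠ k : ℕ in atTop, D * δ ^ (k+1) / (1 - δ) ≤ 1/2 := by
      have h1 : Tendsto (fun k : ℕ => D * δ ^ (k+1) / (1 - δ)) atTop
          (𝓝 (D * 0 / (1 - δ))) := (hδtend.const_mul D).div_const (1 - δ)
      rw [mul_zero, zero_div] at h1
      exact h1.eventually_le_const (by norm_num)
    obtain ⟨M, hM⟩ := eventually_atTop.1 (((hev1.and hev2).and hev3).and hev4)
    have hM1 : ∀ k, M ≤ k → ξs k - ζ < ρ / 2 := fun k hk => (hM k hk).1.1.1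
    have hM2 : ∀ k, M ≤ k → B / U * δ ^ (k+1) ≤ ρ / 2 := fun k hk => (hM k hk).1.1.2
    have hM3 : ∀ k, M ≤ k → K ≤ γ ^ (k+1) * U := fun k hk => (hM k hk).1.2
    have hM4 : D * δ ^ (M+1) / (1 - δ) ≤ 1/2 := (hM M (le_refl M)).2
    -- ζ is never inside the increment interval, for k ≥ M
    have hζout : ∀ k, M ≤ k → ζ < ξs k - θs k := by
      intro k hk
      by_contra hcon2
      push_neg at hcon2
      have hθρ : θs k ≤ ρ / 2 := le_trans (hθsB k).le (hM2 k hk)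
      have ha : |ξs k - θs k - ζ| < ρ := by
        rw [abs_of_nonpos (by linarith)]
        have h0 : ζ - (ξs k - θs k) ≤ θs k := by linarith [hζle k]
        linarith
      have hb : |ξs k - ζ| < ρ := by
        rw [abs_of_nonneg (by linarith [hζle k])]
        linarith [hM1 k hk]
      have hΔK : ‖y (ξs k - θs k) - y (ξs k)‖ ≤ K * θs k := by
        have h1 : ‖y (ξs k - θs k) - y ζ‖ ≤ K * |ξs k - θs k - ζ| := hKlip _ ha
        have h2 : ‖y (ξs k) - y ζ‖ ≤ K * |ξs k - ζ| := hKlip _ hb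
        have h3 : ‖y (ξs k - θs k) - y (ξs k)‖
            ≤ ‖y (ξs k - θs k) - y ζ‖ + ‖y (ξs k) - y ζ‖ := by
          have h4 := norm_sub_le (y (ξs k - θs k) - y ζ) (y (ξs k) - y ζ)
          simpa using h4
        have h4 : |ξs k - θs k - ζ| + |ξs k - ζ| = θs k := by
          rw [abs_of_nonpos (by linarith), abs_of_nonneg (by linarith [hζle k])]
          ring
        calc ‖y (ξs k - θs k) - y (ξs k)‖
            ≤ K * |ξs k - θs k - ζ| + K * |ξs k - ζ| := by linarith
          _ = K * (|ξs k - θs k - ζ| + |ξs k - ζ|) := by ring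
          _ = K * θs k := by rw [h4]
      have h5 : γ ^ (k+1) * U * θs k < K * θs k := lt_of_lt_of_le (hθqs k) hΔK
      have h6 := hM3 k hk
      nlinarith [hθ0s k]
    -- step estimate for k ≥ M
    have hstepM : ∀ k, M ≤ k → (ξs k - ζ) - D * (ξs M - ζ) * δ ^ (k+1) ≤ ξs (k+1) - ζ := by
      intro k hk
      have hout := hζout k hk
      have hek : ξs k - ζ ≤ ξs M - ζ := by
        have h0 := hanti.antitone hk
        linarith
      have ha : |ξs k - θs k - ζ| < ρ := by
        rw [abs_of_nonneg (by linarith)]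
        have h1 : ξs k - θs k - ζ ≤ ξs k - ζ := by linarith [hθ0s k]
        linarith [hM1 k hk]
      have hb : |ξs k - ζ| < ρ := by
        rw [abs_of_nonneg (by linarith [hζle k])]
        linarith [hM1 k hk]
      have hΔK : ‖y (ξs k - θs k) - y (ξs k)‖ ≤ 2 * K * (ξs k - ζ) := by
        have h1 : ‖y (ξs k - θs k) - y ζ‖ ≤ K * |ξs k - θs k - ζ| := hKlip _ ha
        have h2 : ‖y (ξs k) - y ζ‖ ≤ K * |ξs k - ζ| := hKlip _ hb
        have h3 : ‖y (ξs k - θs k) - y (ξs k)‖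
            ≤ ‖y (ξs k - θs k) - y ζ‖ + ‖y (ξs k) - y ζ‖ := by
          have h4 := norm_sub_le (y (ξs k - θs k) - y ζ) (y (ξs k) - y ζ)
          simpa using h4
        rw [abs_of_nonneg (by linarith)] at h1
        rw [abs_of_nonneg (by linarith [hζle k])] at h2
        have h4 : ξs k - θs k - ζ ≤ ξs k - ζ := by linarith [hθ0s k]
        nlinarith
      have hγk1U : (0:ℝ) < γ ^ (k+1) * U := mul_pos (pow_pos hγpos (k+1)) hU0
      have h5 : γ ^ (k+1) * U * θs k < 2 * K * (ξs k - ζ) :=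
        lt_of_lt_of_le (hθqs k) hΔK
      have h8 : θs k ≤ D * (ξs M - ζ) * δ ^ (k+1) := by
        rw [← mul_le_mul_iff_of_pos_right hγk1U]
        have hδγU : δ ^ (k+1) * (γ ^ (k+1) * U) = U := by
          rw [← mul_assoc, hδγ (k+1), one_mul]
        have hre : D * (ξs M - ζ) * δ ^ (k+1) * (γ ^ (k+1) * U)
            = 2 * K * (ξs M - ζ) := by
          have h9 : U ≠ 0 := ne_of_gt hU0
          calc D * (ξs M - ζ) * δ ^ (k+1) * (γ ^ (k+1) * U)
              = D * (ξs M - ζ) * (δ ^ (k+1) * (γ ^ (k+1) * U)) := by ring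
            _ = D * (ξs M - ζ) * U := by rw [hδγU]
            _ = 2 * K / U * U * (ξs M - ζ) := by rw [hD_def]; ring
            _ = 2 * K * (ξs M - ζ) := by rw [div_mul_cancel₀ _ h9]
        rw [hre]
        nlinarith
      linarith [hθls k]
    -- the lower bound by induction
    have hind : ∀ k, M ≤ k → (ξs M - ζ) * (1 - D * (δ ^ (M+1) - δ ^ (k+1)) / (1 - δ))
        ≤ ξs k - ζ := by
      intro k hk
      induction k, hk using Nat.le_induction with
      | base => simp
      | succ n hMn ih =>
        have h1 := hstepM n hMn
        have heM : (0:ℝ) < ξs M - ζ := by linarith [hζlt M]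
        have halg : (ξs M - ζ) * (1 - D * (δ ^ (M+1) - δ ^ (n+1)) / (1 - δ))
            - D * (ξs M - ζ) * δ ^ (n+1)
            = (ξs M - ζ) * (1 - D * (δ ^ (M+1) - δ ^ (n+1+1)) / (1 - δ)) := by
          have hδne : 1 - δ ≠ 0 := by linarith
          field_simp
          ring
        linarith [halg, h1, ih]
    -- conclude: ξs k - ζ stays away from 0, contradicting convergence
    have heM : (0:ℝ) < ξs M - ζ := by linarith [hζlt M]
    have hbound : ∀ k, M ≤ k → (ξs M - ζ) * (1/2) ≤ ξs k - ζ := by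
      intro k hk
      refine le_trans ?_ (hind k hk)
      have hδk1 : (0:ℝ) ≤ δ ^ (k+1) := (pow_pos hδ0 (k+1)).le
      have h1 : D * (δ ^ (M+1) - δ ^ (k+1)) / (1 - δ) ≤ D * δ ^ (M+1) / (1 - δ) := by
        rw [div_le_div_iff₀ (by linarith) (by linarith)]
        nlinarith [mul_pos hD0 (mul_pos (pow_pos hδ0 (k+1))
          (by linarith : (0:ℝ) < 1 - δ))]
      have h2 : D * (δ ^ (M+1) - δ ^ (k+1)) / (1 - δ) ≤ 1/2 := le_trans h1 hM4
      nlinarith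
    have htend0 : Tendsto (fun k => ξs k - ζ) atTop (𝓝 0) := by
      have h1 := htendζ.sub_const ζ
      rwa [sub_self] at h1
    have hlt2 : ∀ᶠ k : ℕ in atTop, ξs k - ζ < (ξs M - ζ) * (1/2) :=
      htend0.eventually_lt_const (by linarith)
    obtain ⟨N, hN⟩ := eventually_atTop.1 hlt2
    exact absurd (hbound (max M N) (le_max_left _ _))
      (not_le.2 (hN (max M N) (le_max_right _ _)))
  -- compact bounds
  have hcb : ∀ b : ℝ, ∃ Cb : ℝ, 0 ≤ Cb ∧ ∀ s ∈ Set.Icc (T₁ + 1) b, ‖g s‖ ≤ Cb := by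
    intro b
    rcases le_or_gt (T₁ + 1) b with hab | hab
    · have hcomp : IsCompact (Set.Icc (T₁ + 1 - 1 - r) b) := isCompact_Icc
      obtain ⟨C, hC⟩ := hcomp.exists_bound_of_continuousOn (hycont _ b (by linarith))
      refine ⟨(2 * max C 0 + 1) / (γ - 1), div_nonneg (by positivity) (by linarith), ?_⟩
      intro s hs
      refine hlocb s hs.1 (max C 0) (le_max_right _ _) ?_
      intro z hz
      exact le_trans (hC z ⟨by linarith [hz.1, hs.1], le_trans hz.2 hs.2⟩) (le_max_left _ _)
    · exact ⟨0, le_refl _, fun s hs => absurd (le_trans hs.1 hs.2) (not_le.2 hab)⟩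
  -- global bound
  set T₂ : ℝ := T₁ + 1 + r with hT₂_def
  obtain ⟨C₁, hC₁0, hC₁⟩ := hcb T₂
  have hglob : ∀ t, T₂ ≤ t → ‖g t‖ ≤ C₁ := by
    intro t ht
    obtain ⟨Cb, hCb0, hCb⟩ := hcb t
    have hT₂1 : T₁ + 1 ≤ T₂ := by rw [hT₂_def]; linarith
    have hne : (Set.Icc (T₁ + 1) t).Nonempty := ⟨T₁ + 1, le_refl _, by linarith⟩
    set S : ℝ := sSup ((fun s => ‖g s‖) '' Set.Icc (T₁ + 1) t) with hS_def
    have hbddS : BddAbove ((fun s => ‖g s‖) '' Set.Icc (T₁ + 1) t) := by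
      refine ⟨Cb, ?_⟩
      rintro v ⟨s, hs, rfl⟩
      exact hCb s hs
    have hSle : ∀ s ∈ Set.Icc (T₁ + 1) t, ‖g s‖ ≤ S :=
      fun s hs => le_csSup hbddS ⟨s, hs, rfl⟩
    have hS0 : 0 ≤ S := le_trans (norm_nonneg _) (hSle (T₁+1) ⟨le_refl _, by linarith⟩)
    have hSbound : S ≤ max C₁ (q * S) := by
      refine csSup_le (hne.image _) ?_
      rintro v ⟨s, hs, rfl⟩
      rcases le_or_gt s T₂ with h1 | h1
      · exact le_trans (hC₁ s ⟨hs.1, h1⟩) (le_max_left _ _)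
      · refine le_trans ?_ (le_max_right _ _)
        refine hcontr s (by rw [hT₂_def] at h1; linarith) S hS0 ?_
        intro w hw
        refine hSle w ⟨?_, le_trans hw.2 hs.2⟩
        rw [hT₂_def] at h1
        linarith [hw.1]
    have hfin2 : S ≤ C₁ := by
      rcases le_max_iff.1 hSbound with h1 | h1
      · exact h1
      · nlinarith
    exact le_trans (hSle t ⟨by linarith, le_refl _⟩) hfin2
  -- decay
  have hdecay : ∀ n : ℕ, ∀ t : ℝ, T₂ + n * r ≤ t → ‖g t‖ ≤ q ^ n * C₁ := by
    intro n
    induction n with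
    | zero => intro t ht; simpa using hglob t (by simpa using ht)
    | succ n ih =>
      intro t ht
      have h1 : T₁ ≤ t := by
        have : (0:ℝ) ≤ (n+1) * r := by positivity
        push_cast at ht ⊢
        linarith [hT₁t₀]
      have h2 : ‖g t‖ ≤ q * (q ^ n * C₁) := by
        refine hcontr t h1 (q ^ n * C₁) (by positivity) ?_
        intro s hs
        refine ih s ?_
        have := hs.1
        push_cast at ht ⊢
        linarith
      calc ‖g t‖ ≤ q * (q ^ n * C₁) := h2
        _ = q ^ (n+1) * C₁ := by ring
  -- conclusion
  refine ⟨g, fun t ht => hyd t ht, ?_⟩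
  rw [tendsto_zero_iff_norm_tendsto_zero]
  rw [Metric.tendsto_atTop]
  intro ε hε
  have hpow : Tendsto (fun n : ℕ => q ^ n * C₁) atTop (𝓝 (0 * C₁)) :=
    (tendsto_pow_atTop_nhds_zero_of_lt_one hq0.le hq1).mul_const C₁
  rw [zero_mul] at hpow
  obtain ⟨n, hn⟩ := (hpow.eventually_lt_const hε).exists
  refine ⟨T₂ + n * r, fun t ht => ?_⟩
  rw [Real.dist_eq, sub_zero, abs_of_nonneg (norm_nonneg _)]
  exact lt_of_le_of_lt (hdecay n t ht) hn
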